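/- Let X, Y be metrizable spaces with Y separable. (a) For every 1 ≤ ξ < ω₁, if f : X → Y is the pointwise limit of a sequence of Δ⁰_ξ-functions, then f is of Baire class ξ. (b) Conversely, for every 1 < ξ < ω₁, if f : X → Y is of Baire class ξ, then f is the pointwise limit of a sequence of Δ⁰_ξ-functions. -/

import Mathlib

open Set Filter Topology TopologicalSpace Ordinal
set_option linter.unusedSectionVars false
set_option maxHeartbeats 1000000

/-- The Borel pointclasses `Σ⁰_ξ` of a metrizable space, for ordinals `ξ ≥ 1`:
`Σ⁰₁` is the collection of open sets and, for `ξ > 1`, `Σ⁰_ξ` consists of the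
countable unions of sets each of which belongs to `Π⁰_ν` (i.e. has its
complement in `Σ⁰_ν`) for some `1 ≤ ν < ξ`. -/
noncomputable def SigmaZero (X : Type*) [TopologicalSpace X] : Ordinal.{0} → Set (Set X) :=
  WellFounded.fix wellFounded_lt fun ξ ih =>
    if ξ = 1 then {s | IsOpen s}
    else {s | ∃ f : ℕ → Set X,
      (∀ n, ∃ ν, ∃ hν : ν < ξ, 1 ≤ ν ∧ (f n)ᶜ ∈ ih ν hν) ∧ s = ⋃ n, f n}

/-- `Π⁰_ξ`: the complements of `Σ⁰_ξ` sets (with the convention that `Π⁰₀` is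
the collection of clopen sets). -/
def PiZero (X : Type*) [TopologicalSpace X] (ξ : Ordinal.{0}) : Set (Set X) :=
  if ξ = 0 then {s | IsClopen s} else {s | sᶜ ∈ SigmaZero X ξ}

/-- `Δ⁰_ξ = Σ⁰_ξ ∩ Π⁰_ξ`. -/
def DeltaZero (X : Type*) [TopologicalSpace X] (ξ : Ordinal.{0}) : Set (Set X) :=
  SigmaZero X ξ ∩ PiZero X ξ

/-- `f` is a `Δ⁰_ξ`-function if preimages of `Σ⁰_ξ` sets are `Σ⁰_ξ`. -/
def IsDeltaFun {X Y : Type*} [TopologicalSpace X] [TopologicalSpace Y]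
    (ξ : Ordinal.{0}) (f : X → Y) : Prop :=
  ∀ A ∈ SigmaZero Y ξ, f ⁻¹' A ∈ SigmaZero X ξ

/-- Baire class `ξ` functions (for `ξ ≥ 1`): `f` is of Baire class `1` if
preimages of open sets are `Σ⁰₂`, and for `ξ > 1` it is of Baire class `ξ` if it
is the pointwise limit of a sequence of functions each of Baire class `ν` for
some `1 ≤ ν < ξ`. -/
noncomputable def BaireClass {X Y : Type*} [TopologicalSpace X] [TopologicalSpace Y] :
    Ordinal.{0} → (X → Y) → Prop :=
  WellFounded.fix wellFounded_lt fun ξ ih f =>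
    if ξ = 1 then ∀ U : Set Y, IsOpen U → f ⁻¹' U ∈ SigmaZero X 2
    else ∃ g : ℕ → X → Y,
      (∀ n, ∃ ν, ∃ hν : ν < ξ, 1 ≤ ν ∧ ih ν hν (g n)) ∧
      ∀ x, Tendsto (fun n => g n x) atTop (𝓝 (f x))


section Unfold
variable {X Y : Type*} [TopologicalSpace X] [TopologicalSpace Y]

theorem sigmaZero_def (ξ : Ordinal.{0}) :
    SigmaZero X ξ = if ξ = 1 then {s | IsOpen s}
    else {s | ∃ f : ℕ → Set X,
      (∀ n, ∃ ν, ∃ _ : ν < ξ, 1 ≤ ν ∧ (f n)ᶜ ∈ SigmaZero X ν) ∧ s = ⋃ n, f n} :=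
  WellFounded.fix_eq _ _ _

theorem sigmaZero_one : SigmaZero X 1 = {s : Set X | IsOpen s} := by
  rw [sigmaZero_def]; simp

theorem mem_sigmaZero_iff {ξ : Ordinal.{0}} (hξ : ξ ≠ 1) {s : Set X} :
    s ∈ SigmaZero X ξ ↔ ∃ f : ℕ → Set X,
      (∀ n, ∃ ν, ∃ _ : ν < ξ, 1 ≤ ν ∧ (f n)ᶜ ∈ SigmaZero X ν) ∧ s = ⋃ n, f n := by
  rw [sigmaZero_def, if_neg hξ]; rfl

theorem baireClass_def (ξ : Ordinal.{0}) (f : X → Y) :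
    BaireClass ξ f = if ξ = 1 then ∀ U : Set Y, IsOpen U → f ⁻¹' U ∈ SigmaZero X 2
    else ∃ g : ℕ → X → Y,
      (∀ n, ∃ ν, ∃ _ : ν < ξ, 1 ≤ ν ∧ BaireClass ν (g n)) ∧
      ∀ x, Tendsto (fun n => g n x) atTop (𝓝 (f x)) := by
  have := WellFounded.fix_eq (C := fun _ : Ordinal.{0} => (X → Y) → Prop)
    wellFounded_lt (fun ξ ih f =>
      if ξ = 1 then ∀ U : Set Y, IsOpen U → f ⁻¹' U ∈ SigmaZero X 2
      else ∃ g : ℕ → X → Y,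
        (∀ n, ∃ ν, ∃ hν : ν < ξ, 1 ≤ ν ∧ ih ν hν (g n)) ∧
        ∀ x, Tendsto (fun n => g n x) atTop (𝓝 (f x))) ξ
  exact congrFun this f

theorem baireClass_one (f : X → Y) :
    BaireClass 1 f ↔ ∀ U : Set Y, IsOpen U → f ⁻¹' U ∈ SigmaZero X 2 := by
  rw [baireClass_def]; simp

theorem baireClass_ne_one {ξ : Ordinal.{0}} (hξ : ξ ≠ 1) (f : X → Y) :
    BaireClass ξ f ↔ ∃ g : ℕ → X → Y,
      (∀ n, ∃ ν, ∃ _ : ν < ξ, 1 ≤ ν ∧ BaireClass ν (g n)) ∧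
      ∀ x, Tendsto (fun n => g n x) atTop (𝓝 (f x)) := by
  rw [baireClass_def, if_neg hξ]

end Unfold

section Hierarchy
variable {X : Type*} [TopologicalSpace X]

theorem isOpen_mem_sigmaZero_one {s : Set X} (hs : IsOpen s) : s ∈ SigmaZero X 1 := by
  rw [sigmaZero_one]; exact hs

theorem sigmaZero_iUnion {ξ : Ordinal.{0}} (hξ : 1 ≤ ξ) {s : ℕ → Set X}
    (h : ∀ n, s n ∈ SigmaZero X ξ) : (⋃ n, s n) ∈ SigmaZero X ξ := by
  rcases eq_or_lt_of_le hξ with rfl | hξ1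
  · rw [sigmaZero_one] at *
    exact isOpen_iUnion h
  · have hne : ξ ≠ 1 := hξ1.ne'
    choose F hF hFU using fun n => (mem_sigmaZero_iff hne).1 (h n)
    set e : ℕ ≃ ℕ × ℕ := (Denumerable.eqv (ℕ × ℕ)).symm
    refine (mem_sigmaZero_iff hne).2 ⟨fun k => F (e k).1 (e k).2, fun k => hF _ _, ?_⟩
    ext x
    simp only [mem_iUnion]
    constructor
    · rintro ⟨n, hx⟩
      rw [hFU n] at hx
      obtain ⟨m, hm⟩ := mem_iUnion.1 hx
      exact ⟨e.symm (n, m), by simpa using hm⟩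
    · rintro ⟨k, hk⟩
      exact ⟨(e k).1, by rw [hFU]; exact mem_iUnion.2 ⟨(e k).2, hk⟩⟩

theorem mem_sigmaZero_of_compl {ξ ν : Ordinal.{0}} (h1 : 1 ≤ ν) (hlt : ν < ξ) {s : Set X}
    (h : sᶜ ∈ SigmaZero X ν) : s ∈ SigmaZero X ξ := by
  have hne : ξ ≠ 1 := (lt_of_le_of_lt h1 hlt).ne'
  exact (mem_sigmaZero_iff hne).2 ⟨fun _ => s, fun n => ⟨ν, hlt, h1, h⟩, (iUnion_const s).symm⟩

theorem sigmaZero_univ {ξ : Ordinal.{0}} (hξ : 1 ≤ ξ) : (univ : Set X) ∈ SigmaZero X ξ := by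
  rcases eq_or_lt_of_le hξ with rfl | hξ1
  · exact isOpen_mem_sigmaZero_one isOpen_univ
  · refine mem_sigmaZero_of_compl le_rfl hξ1 ?_
    rw [compl_univ]; exact isOpen_mem_sigmaZero_one isOpen_empty

theorem sigmaZero_empty {ξ : Ordinal.{0}} (hξ : 1 ≤ ξ) : (∅ : Set X) ∈ SigmaZero X ξ := by
  rcases eq_or_lt_of_le hξ with rfl | hξ1
  · exact isOpen_mem_sigmaZero_one isOpen_empty
  · refine mem_sigmaZero_of_compl le_rfl hξ1 ?_
    rw [compl_empty]; exact isOpen_mem_sigmaZero_one isOpen_univ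

theorem IsClosed.mem_sigmaZero {ξ : Ordinal.{0}} (hξ : 1 < ξ) {s : Set X}
    (hs : IsClosed s) : s ∈ SigmaZero X ξ :=
  mem_sigmaZero_of_compl le_rfl hξ (isOpen_mem_sigmaZero_one hs.isOpen_compl)

theorem IsOpen.mem_sigmaZero [MetrizableSpace X] {ξ : Ordinal.{0}} (hξ : 1 ≤ ξ)
    {s : Set X} (hs : IsOpen s) : s ∈ SigmaZero X ξ := by
  rcases eq_or_lt_of_le hξ with rfl | hξ1
  · exact isOpen_mem_sigmaZero_one hs
  · letI : MetricSpace X := TopologicalSpace.metrizableSpaceMetric X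
    rcases eq_empty_or_nonempty sᶜ with hc | hc
    · have : s = Set.univ := by rwa [compl_empty_iff] at hc
      rw [this]; exact sigmaZero_univ hξ
    · set C : ℕ → Set X := fun n => {x | (1 : ℝ) / (n + 1) ≤ Metric.infDist x sᶜ} with hC
      have hCc : ∀ n, IsClosed (C n) := fun n =>
        IsClosed.preimage (Metric.continuous_infDist_pt sᶜ) isClosed_Ici
      have hsC : s = ⋃ n, C n := by
        ext x
        simp only [mem_iUnion, hC, mem_setOf_eq]
        constructor
        · intro hx
          have hpos : 0 < Metric.infDist x sᶜ :=
            (hs.isClosed_compl.notMem_iff_infDist_pos hc).1 (by simpa using hx)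
          obtain ⟨n, hn⟩ := exists_nat_one_div_lt hpos
          exact ⟨n, hn.le⟩
        · rintro ⟨n, hn⟩
          by_contra hx
          have : Metric.infDist x sᶜ = 0 := Metric.infDist_zero_of_mem (by simpa using hx)
          rw [this] at hn
          have : (0 : ℝ) < 1 / (n + 1) := by positivity
          linarith
      rw [hsC]
      exact (mem_sigmaZero_iff hξ1.ne').2 ⟨C, fun n =>
        ⟨1, hξ1, le_rfl, isOpen_mem_sigmaZero_one (hCc n).isOpen_compl⟩, rfl⟩

theorem sigmaZero_mono [MetrizableSpace X] {α β : Ordinal.{0}} (hα : 1 ≤ α) (hαβ : α ≤ β) :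
    SigmaZero X α ⊆ SigmaZero X β := by
  rcases eq_or_lt_of_le hαβ with rfl | hlt
  · exact subset_rfl
  · intro s hs
    rcases eq_or_lt_of_le hα with rfl | hα1
    · rw [sigmaZero_one] at hs
      exact hs.mem_sigmaZero (hα.trans hαβ)
    · obtain ⟨F, hF, rfl⟩ := (mem_sigmaZero_iff hα1.ne').1 hs
      refine (mem_sigmaZero_iff (hα1.trans hlt).ne').2 ⟨F, fun n => ?_, rfl⟩
      obtain ⟨ν, hν, h1, hc⟩ := hF n
      exact ⟨ν, hν.trans hlt, h1, hc⟩

theorem sigmaZero_union2 {ξ : Ordinal.{0}} (hξ : 1 ≤ ξ) {s t : Set X}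
    (hs : s ∈ SigmaZero X ξ) (ht : t ∈ SigmaZero X ξ) : s ∪ t ∈ SigmaZero X ξ := by
  have : s ∪ t = ⋃ k : ℕ, (if k = 0 then s else t) := by
    ext x
    simp only [mem_union, mem_iUnion]
    constructor
    · rintro (h | h)
      · exact ⟨0, by simpa using h⟩
      · exact ⟨1, by simpa using h⟩
    · rintro ⟨k, hk⟩
      by_cases h0 : k = 0
      · rw [if_pos h0] at hk; exact Or.inl hk
      · rw [if_neg h0] at hk; exact Or.inr hk
  rw [this]
  exact sigmaZero_iUnion hξ fun k => by by_cases h0 : k = 0 <;> simp [h0, hs, ht]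

theorem sigmaZero_inter [MetrizableSpace X] {ξ : Ordinal.{0}} (hξ : 1 ≤ ξ) {s t : Set X}
    (hs : s ∈ SigmaZero X ξ) (ht : t ∈ SigmaZero X ξ) : s ∩ t ∈ SigmaZero X ξ := by
  rcases eq_or_lt_of_le hξ with rfl | hξ1
  · rw [sigmaZero_one] at *
    exact hs.inter ht
  · obtain ⟨A, hA, rfl⟩ := (mem_sigmaZero_iff hξ1.ne').1 hs
    obtain ⟨B, hB, rfl⟩ := (mem_sigmaZero_iff hξ1.ne').1 ht
    set e : ℕ ≃ ℕ × ℕ := (Denumerable.eqv (ℕ × ℕ)).symm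
    refine (mem_sigmaZero_iff hξ1.ne').2 ⟨fun k => A (e k).1 ∩ B (e k).2, fun k => ?_, ?_⟩
    · obtain ⟨ν₁, hν₁, h1₁, hc₁⟩ := hA (e k).1
      obtain ⟨ν₂, hν₂, h1₂, hc₂⟩ := hB (e k).2
      refine ⟨max ν₁ ν₂, max_lt hν₁ hν₂, le_max_of_le_left h1₁, ?_⟩
      rw [compl_inter]
      exact sigmaZero_union2 (le_max_of_le_left h1₁)
        (sigmaZero_mono h1₁ (le_max_left _ _) hc₁)
        (sigmaZero_mono h1₂ (le_max_right _ _) hc₂)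
    · ext x
      simp only [mem_inter_iff, mem_iUnion]
      constructor
      · rintro ⟨⟨n, hn⟩, ⟨m, hm⟩⟩
        exact ⟨e.symm (n, m), by simpa using ⟨hn, hm⟩⟩
      · rintro ⟨k, hk1, hk2⟩
        exact ⟨⟨(e k).1, hk1⟩, ⟨(e k).2, hk2⟩⟩

theorem sigmaZero_biInter_lt [MetrizableSpace X] {ξ : Ordinal.{0}} (hξ : 1 ≤ ξ) {s : ℕ → Set X}
    (h : ∀ i, s i ∈ SigmaZero X ξ) (n : ℕ) :
    (⋂ i, ⋂ _ : i < n, s i) ∈ SigmaZero X ξ := by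
  induction n with
  | zero => simpa using sigmaZero_univ hξ
  | succ n ih => rw [Set.biInter_lt_succ]; exact sigmaZero_inter hξ ih (h n)

end Hierarchy

section PartFun
variable {X Y : Type*} [TopologicalSpace X] [TopologicalSpace Y]

/-- `g` is countable-range with fibers (a covering on which it is constant) in `Σ⁰_ξ`. -/
def CtblPart (ξ : Ordinal.{0}) (g : X → Y) : Prop :=
  ∃ (D : ℕ → Set X) (c : ℕ → Y), (∀ k, D k ∈ SigmaZero X ξ) ∧ (⋃ k, D k) = Set.univ ∧
    ∀ k, ∀ x ∈ D k, g x = c k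

theorem CtblPart.preimage {ξ : Ordinal.{0}} (hξ : 1 ≤ ξ) {g : X → Y} (hg : CtblPart ξ g)
    (A : Set Y) : g ⁻¹' A ∈ SigmaZero X ξ := by
  classical
  obtain ⟨D, c, hD, hcov, hval⟩ := hg
  have hpre : g ⁻¹' A = ⋃ k, (if c k ∈ A then D k else ∅) := by
    ext x
    simp only [mem_preimage, mem_iUnion]
    constructor
    · intro hx
      have hx' : x ∈ ⋃ k, D k := by rw [hcov]; exact mem_univ x
      obtain ⟨k, hk⟩ := mem_iUnion.1 hx'
      refine ⟨k, ?_⟩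
      rw [if_pos (by rwa [← hval k x hk])]
      exact hk
    · rintro ⟨k, hk⟩
      by_cases h : c k ∈ A
      · rw [if_pos h] at hk; rwa [hval k x hk]
      · rw [if_neg h] at hk; exact absurd hk (notMem_empty x)
  rw [hpre]
  exact sigmaZero_iUnion hξ fun k => by
    by_cases h : c k ∈ A <;> simp [h, hD k, sigmaZero_empty hξ]

theorem CtblPart.mono [MetrizableSpace X] {α β : Ordinal.{0}} (hα : 1 ≤ α) (hαβ : α ≤ β)
    {g : X → Y} (hg : CtblPart α g) : CtblPart β g := by
  obtain ⟨D, c, hD, hcov, hval⟩ := hg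
  exact ⟨D, c, fun k => sigmaZero_mono hα hαβ (hD k), hcov, hval⟩

end PartFun

section BUnion
variable {X : Type*} [TopologicalSpace X]

theorem sigmaZero_biUnion_lt {ξ : Ordinal.{0}} (hξ : 1 ≤ ξ) {s : ℕ → Set X} {n : ℕ}
    (h : ∀ i < n, s i ∈ SigmaZero X ξ) :
    (⋃ i, ⋃ _ : i < n, s i) ∈ SigmaZero X ξ := by
  classical
  have : (⋃ i, ⋃ _ : i < n, s i) = ⋃ i, (if i < n then s i else ∅) := by
    ext x
    simp only [mem_iUnion]
    constructor
    · rintro ⟨i, hi, hx⟩; exact ⟨i, by rwa [if_pos hi]⟩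
    · rintro ⟨i, hx⟩
      by_cases hi : i < n
      · rw [if_pos hi] at hx; exact ⟨i, hi, hx⟩
      · rw [if_neg hi] at hx; exact absurd hx (notMem_empty x)
  rw [this]
  exact sigmaZero_iUnion hξ fun i => by
    by_cases hi : i < n <;> simp [hi, h, sigmaZero_empty hξ]

theorem sigmaZero_biInter_lt' [MetrizableSpace X] {ξ : Ordinal.{0}} (hξ : 1 ≤ ξ) {s : ℕ → Set X}
    {n : ℕ} (h : ∀ i < n, s i ∈ SigmaZero X ξ) :
    (⋂ i, ⋂ _ : i < n, s i) ∈ SigmaZero X ξ := by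
  induction n with
  | zero => simpa using sigmaZero_univ hξ
  | succ n ih =>
    rw [Set.biInter_lt_succ]
    exact sigmaZero_inter hξ (ih fun i hi => h i (hi.trans n.lt_succ_self))
      (h n n.lt_succ_self)

end BUnion

section LemmaD
variable {X : Type*} [TopologicalSpace X] [MetrizableSpace X]

/-- A `Π⁰_ν` set (`1 ≤ ν ≤ ξ`) is a decreasing intersection of sets that are, together
with their complements, of level `Σ⁰_{κ+1}` for some `1 ≤ κ < ξ`. -/
theorem pi_eq_iInter {ξ ν : Ordinal.{0}} (hξ : 1 < ξ) (h1 : 1 ≤ ν) (hνξ : ν ≤ ξ)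
    {Q : Set X} (hQ : Qᶜ ∈ SigmaZero X ν) :
    ∃ S : ℕ → Set X, (∀ j, Q ⊆ S j) ∧ Antitone S ∧ (⋂ j, S j) = Q ∧
      ∀ j, ∃ κ, 1 ≤ κ ∧ κ < ξ ∧ S j ∈ SigmaZero X (κ + 1) ∧ (S j)ᶜ ∈ SigmaZero X (κ + 1) := by
  have hsucc : ∀ κ : Ordinal.{0}, κ < κ + 1 := fun κ => by
    rw [Ordinal.add_one_eq_succ]; exact Order.lt_succ κ
  rcases lt_or_eq_of_le hνξ with hlt | rfl
  · refine ⟨fun _ => Q, fun _ => subset_rfl, antitone_const, iInter_const Q,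
      fun j => ⟨ν, h1, hlt, ?_, ?_⟩⟩
    · exact mem_sigmaZero_of_compl h1 (hsucc ν) hQ
    · exact sigmaZero_mono h1 (hsucc ν).le hQ
  · obtain ⟨R, hR, hQc⟩ := (mem_sigmaZero_iff hξ.ne').1 hQ
    choose νm hνm h1m hcm using hR
    have hnotR : ∀ x, x ∈ Q ↔ ∀ m, x ∉ R m := by
      intro x
      constructor
      · intro hx m hm
        have : x ∈ Qᶜ := by rw [hQc]; exact mem_iUnion.2 ⟨m, hm⟩
        exact this hx
      · intro hx
        by_contra hq
        have : x ∈ Qᶜ := hq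
        rw [hQc] at this
        obtain ⟨m, hm⟩ := mem_iUnion.1 this
        exact hx m hm
    refine ⟨fun j => ⋂ m, ⋂ _ : m < j + 1, (R m)ᶜ, ?_, ?_, ?_, ?_⟩
    · intro j x hx
      exact mem_iInter.2 fun m => mem_iInter.2 fun _ => (hnotR x).1 hx m
    · intro j j' hjj'
      exact fun x hx => mem_iInter.2 fun m => mem_iInter.2 fun hm =>
        mem_iInter.1 (mem_iInter.1 hx m) (hm.trans_le (by omega))
    · ext x
      simp only [mem_iInter, mem_compl_iff]
      constructor
      · intro hx
        exact (hnotR x).2 fun m => hx m m m.lt_succ_self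
      · intro hx j m _
        exact (hnotR x).1 hx m
    · intro j
      set κ : Ordinal.{0} := Finset.sup (Finset.range (j + 1)) νm with hκ
      have hmem : ∀ m < j + 1, νm m ≤ κ := fun m hm =>
        Finset.le_sup (Finset.mem_range.2 hm)
      have h1κ : 1 ≤ κ := le_trans (h1m 0) (hmem 0 j.succ_pos)
      have hκξ : κ < ν := by
        rw [hκ, Finset.sup_lt_iff (lt_of_le_of_lt (zero_le (a := (1 : Ordinal.{0}))) hξ)]
        exact fun m _ => hνm m
      have h1κ1 : (1 : Ordinal.{0}) ≤ κ + 1 := h1κ.trans (hsucc κ).le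
      refine ⟨κ, h1κ, hκξ, ?_, ?_⟩
      · exact sigmaZero_biInter_lt' h1κ1 (fun m hm =>
          sigmaZero_mono (h1m m) ((hmem m hm).trans (hsucc κ).le) (hcm m))
      · have hc : (⋂ m, ⋂ _ : m < j + 1, (R m)ᶜ)ᶜ = ⋃ m, ⋃ _ : m < j + 1, R m := by
          simp [compl_iInter]
        rw [hc]
        exact sigmaZero_biUnion_lt h1κ1 fun m hm =>
          mem_sigmaZero_of_compl (h1m m) (lt_of_le_of_lt (hmem m hm) (hsucc κ)) (hcm m)

end LemmaD

section LimitLemma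
variable {X Y : Type*} [TopologicalSpace X]

/-- If `f` is a pointwise limit of functions whose preimages of closed sets are `Π⁰_γ`,
then preimages of open sets under `f` are `Σ⁰_{γ+1}`. -/
theorem limit_measurable [MetricSpace Y] {γ : Ordinal.{0}} (hγ : 1 ≤ γ)
    {g : ℕ → X → Y} {f : X → Y}
    (hg : ∀ (n : ℕ) (C : Set Y), IsClosed C → (g n ⁻¹' C)ᶜ ∈ SigmaZero X γ)
    (hlim : ∀ x, Tendsto (fun n => g n x) atTop (𝓝 (f x)))
    {U : Set Y} (hU : IsOpen U) : f ⁻¹' U ∈ SigmaZero X (γ + 1) := by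
  have hsucc : γ < γ + 1 := by rw [Ordinal.add_one_eq_succ]; exact Order.lt_succ γ
  have hne : γ + 1 ≠ 1 := ((lt_of_le_of_lt hγ hsucc)).ne'
  rcases eq_empty_or_nonempty Uᶜ with hc | hc
  · have hU' : U = Set.univ := by rwa [compl_empty_iff] at hc
    rw [hU', preimage_univ]
    exact sigmaZero_univ (hγ.trans hsucc.le)
  · set C : ℕ → Set Y := fun m => {y | (1 : ℝ) / (m + 1) ≤ Metric.infDist y Uᶜ} with hCdef
    have hCc : ∀ m, IsClosed (C m) := fun m =>
      IsClosed.preimage (Metric.continuous_infDist_pt Uᶜ) isClosed_Ici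
    set e : ℕ ≃ ℕ × ℕ := (Denumerable.eqv (ℕ × ℕ)).symm
    set W : ℕ → Set X := fun p => ⋂ n, ⋂ _ : (e p).2 ≤ n, g n ⁻¹' C (e p).1 with hWdef
    have hfW : f ⁻¹' U = ⋃ p, W p := by
      ext x
      simp only [mem_preimage, mem_iUnion, hWdef, mem_iInter, mem_preimage, hCdef, mem_setOf_eq]
      constructor
      · intro hx
        have hpos : 0 < Metric.infDist (f x) Uᶜ :=
          (hU.isClosed_compl.notMem_iff_infDist_pos hc).1 (by simpa using hx)
        obtain ⟨m, hm⟩ := exists_nat_one_div_lt (half_pos hpos)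
        have hm2 : 2 / (m + 1 : ℝ) < Metric.infDist (f x) Uᶜ := by
          rw [div_lt_iff₀ (by positivity)] at hm ⊢
          linarith
        obtain ⟨N, hN⟩ := (Metric.tendsto_atTop.1 (hlim x)) ((1 : ℝ) / (m + 1)) (by positivity)
        refine ⟨e.symm (m, N), ?_⟩
        intro n hn
        rw [Equiv.apply_symm_apply] at hn ⊢
        have hd := hN n hn
        have hle := Metric.infDist_le_infDist_add_dist (x := f x) (y := g n x) (s := Uᶜ)
        have : dist (f x) (g n x) < 1 / (m + 1) := by rwa [dist_comm]
        have h2 : (2 : ℝ) / (m + 1) = 1 / (m + 1) + 1 / (m + 1) := by ring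
        linarith
      · rintro ⟨p, hp⟩
        by_contra hx
        have hx' : Metric.infDist (f x) Uᶜ = 0 :=
          Metric.infDist_zero_of_mem (by simpa using hx)
        obtain ⟨N, hN⟩ := (Metric.tendsto_atTop.1 (hlim x)) ((1 : ℝ) / ((e p).1 + 1))
          (by positivity)
        set n := max N (e p).2
        have h1 := hp n (le_max_right _ _)
        have h2 := hN n (le_max_left _ _)
        have hle := Metric.infDist_le_infDist_add_dist (x := g n x) (y := f x) (s := Uᶜ)
        rw [hx', zero_add] at hle
        linarith
    rw [hfW]
    refine (mem_sigmaZero_iff hne).2 ⟨W, fun p => ⟨γ, hsucc, hγ, ?_⟩, by simp⟩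
    have : (W p)ᶜ = ⋃ n, ⋃ _ : (e p).2 ≤ n, (g n ⁻¹' C (e p).1)ᶜ := by
      simp [hWdef, compl_iInter]
    rw [this]
    have : (⋃ n, ⋃ _ : (e p).2 ≤ n, (g n ⁻¹' C (e p).1)ᶜ)
        = ⋃ k : ℕ, (g ((e p).2 + k) ⁻¹' C (e p).1)ᶜ := by
      ext x
      simp only [mem_iUnion]
      constructor
      · rintro ⟨n, hn, hx⟩
        exact ⟨n - (e p).2, by rwa [Nat.add_sub_cancel' hn]⟩
      · rintro ⟨k, hk⟩
        exact ⟨(e p).2 + k, Nat.le_add_right _ _, hk⟩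
    rw [this]
    exact sigmaZero_iUnion hγ fun k => hg _ _ (hCc _)

end LimitLemma

section BaireMeasurable
variable {X Y : Type*} [TopologicalSpace X] [TopologicalSpace Y]
  [MetrizableSpace X] [MetrizableSpace Y]

/-- A Baire class `ξ` function is `Σ⁰_{ξ+1}`-measurable. -/
theorem BaireClass.measurable {ξ : Ordinal.{0}} (hξ : 1 ≤ ξ) {f : X → Y}
    (hf : BaireClass ξ f) {U : Set Y} (hU : IsOpen U) : f ⁻¹' U ∈ SigmaZero X (ξ + 1) := by
  induction ξ using Ordinal.induction generalizing f U with
  | h ξ IH =>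
  rcases eq_or_lt_of_le hξ with rfl | hξ1
  · rw [baireClass_one] at hf
    have h12 : (1 : Ordinal.{0}) + 1 = 2 := one_add_one_eq_two
    rw [h12]
    exact hf U hU
  · letI : MetricSpace Y := TopologicalSpace.metrizableSpaceMetric Y
    obtain ⟨g, hg, hlim⟩ := (baireClass_ne_one hξ1.ne' f).1 hf
    have hsle : ∀ ν : Ordinal.{0}, ν < ξ → ν + 1 ≤ ξ := fun ν hν => by
      rw [Ordinal.add_one_eq_succ]; exact Order.succ_le_of_lt hν
    have hg' : ∀ (n : ℕ) (C : Set Y), IsClosed C → (g n ⁻¹' C)ᶜ ∈ SigmaZero X ξ := by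
      intro n C hC
      obtain ⟨ν, hν, h1, hb⟩ := hg n
      have := IH ν hν h1 hb hC.isOpen_compl
      rw [preimage_compl] at this
      exact sigmaZero_mono (h1.trans (by
        rw [Ordinal.add_one_eq_succ]; exact (Order.le_succ ν))) (hsle ν hν) this
    exact limit_measurable hξ1.le hg' hlim hU

end BaireMeasurable

section Approx
variable {X Y : Type*} [TopologicalSpace X] [MetrizableSpace X] [MetricSpace Y]
  [SeparableSpace Y]

/-- Uniform approximation of a `Σ⁰_ξ`-measurable function by a countable-range function
with `Σ⁰_ξ` fibers. -/
theorem approx_ctblPart [Nonempty X] {ξ : Ordinal.{0}} (hξ : 1 < ξ) {g : X → Y}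
    (hg : ∀ U : Set Y, IsOpen U → g ⁻¹' U ∈ SigmaZero X ξ) {ε : ℝ} (hε : 0 < ε) :
    ∃ h : X → Y, CtblPart ξ h ∧ ∀ x, dist (h x) (g x) < ε := by
  classical
  have hY : Nonempty Y := ⟨g (Classical.arbitrary X)⟩
  set y : ℕ → Y := TopologicalSpace.denseSeq Y
  have hB : ∀ i, g ⁻¹' Metric.ball (y i) ε ∈ SigmaZero X ξ :=
    fun i => hg _ Metric.isOpen_ball
  choose P hP hBU using fun i => (mem_sigmaZero_iff hξ.ne').1 (hB i)
  choose ν hνlt hν1 hνc using hP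
  set e : ℕ ≃ ℕ × ℕ := (Denumerable.eqv (ℕ × ℕ)).symm
  set Q : ℕ → Set X := fun l => P (e l).1 (e l).2 with hQdef
  set lab : ℕ → Y := fun l => y (e l).1 with hlabdef
  have hxQ : ∀ x, ∃ l, x ∈ Q l := by
    intro x
    obtain ⟨i, hi⟩ := Metric.denseRange_iff.1 (TopologicalSpace.denseRange_denseSeq Y) (g x) ε hε
    have hx : x ∈ g ⁻¹' Metric.ball (y i) ε := by
      simpa [Metric.mem_ball, dist_comm] using hi
    rw [hBU i] at hx
    obtain ⟨m, hm⟩ := mem_iUnion.1 hx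
    exact ⟨e.symm (i, m), by simpa [hQdef] using hm⟩
  have hdistQ : ∀ l x, x ∈ Q l → dist (g x) (lab l) < ε := by
    intro l x hx
    have : x ∈ g ⁻¹' Metric.ball (y (e l).1) ε := by
      rw [hBU (e l).1]
      exact mem_iUnion.2 ⟨(e l).2, hx⟩
    simpa [Metric.mem_ball] using this
  have hQmem : ∀ l, Q l ∈ SigmaZero X ξ := fun l =>
    mem_sigmaZero_of_compl (hν1 _ _) (hνlt _ _) (hνc _ _)
  have hQcmem : ∀ l, (Q l)ᶜ ∈ SigmaZero X ξ := fun l =>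
    sigmaZero_mono (hν1 _ _) (hνlt _ _).le (hνc _ _)
  set φ : X → ℕ := fun x => sInf {l | x ∈ Q l} with hφdef
  refine ⟨fun x => lab (φ x), ⟨fun k => Q k ∩ ⋂ i, ⋂ _ : i < k, (Q i)ᶜ, lab, fun k => ?_, ?_, ?_⟩, ?_⟩
  · exact sigmaZero_inter (le_of_lt hξ) (hQmem k)
      (sigmaZero_biInter_lt' (le_of_lt hξ) fun i _ => hQcmem i)
  · ext x
    simp only [mem_iUnion, mem_univ, iff_true]
    refine ⟨φ x, ?_, ?_⟩
    · exact Nat.sInf_mem (hxQ x)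
    · exact mem_iInter.2 fun i => mem_iInter.2 fun hi => fun hxi =>
        absurd (Nat.sInf_le hxi) (not_le.2 hi)
  · intro k x hx
    obtain ⟨hxk, hlt⟩ := hx
    have h1 : φ x ≤ k := Nat.sInf_le hxk
    have h2 : ¬ φ x < k := fun hc => by
      have := mem_iInter.1 (mem_iInter.1 hlt (φ x)) hc
      exact this (Nat.sInf_mem (hxQ x))
    exact congrArg lab (le_antisymm h1 (not_lt.1 h2))
  · intro x
    have := hdistQ (φ x) x (Nat.sInf_mem (hxQ x))
    rwa [dist_comm]

end Approx

section Approx2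
variable {X Y : Type*} [TopologicalSpace X] [MetrizableSpace X] [MetricSpace Y]
  [SeparableSpace Y]

/-- A `Σ⁰_{ξ+1}`-measurable function is uniformly approximated by a countable-range
function which is a pointwise *eventually equal* limit of countable-range functions with
fibers of level `< ξ`. -/
theorem approx_eventually [Nonempty X] {ξ : Ordinal.{0}} (hξ : 1 < ξ) {f : X → Y}
    (hf : ∀ U : Set Y, IsOpen U → f ⁻¹' U ∈ SigmaZero X (ξ + 1)) {ε : ℝ} (hε : 0 < ε) :
    ∃ (h : X → Y) (H : ℕ → X → Y),
      (∀ x, dist (h x) (f x) < ε) ∧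
      (∀ x, ∀ᶠ j in atTop, H j x = h x) ∧
      (∀ j, ∃ γ, 1 ≤ γ ∧ γ < ξ ∧ CtblPart (γ + 1) (H j)) := by
  classical
  have hY : Nonempty Y := ⟨f (Classical.arbitrary X)⟩
  have hltsucc : ∀ κ : Ordinal.{0}, κ < κ + 1 := fun κ => by
    rw [Ordinal.add_one_eq_succ]; exact Order.lt_succ κ
  have hsucc1 : (ξ + 1) ≠ 1 := (lt_trans hξ (hltsucc ξ)).ne'
  set y : ℕ → Y := TopologicalSpace.denseSeq Y
  choose P hP hBU using fun i : ℕ =>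
    (mem_sigmaZero_iff hsucc1).1 (hf (Metric.ball (y i) ε) Metric.isOpen_ball)
  choose ν hνlt hν1 hνc using hP
  have hνle : ∀ i m, ν i m ≤ ξ := fun i m => by
    have := hνlt i m; rwa [Ordinal.add_one_eq_succ, Order.lt_succ_iff] at this
  set e : ℕ ≃ ℕ × ℕ := (Denumerable.eqv (ℕ × ℕ)).symm
  set Q : ℕ → Set X := fun l => P (e l).1 (e l).2 with hQdef
  set lab : ℕ → Y := fun l => y (e l).1 with hlabdef
  have hxQ : ∀ x, ∃ l, x ∈ Q l := by
    intro x
    obtain ⟨i, hi⟩ := Metric.denseRange_iff.1 (TopologicalSpace.denseRange_denseSeq Y) (f x) ε hε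
    have hx : x ∈ f ⁻¹' Metric.ball (y i) ε := by
      simpa [Metric.mem_ball, dist_comm] using hi
    rw [hBU i] at hx
    obtain ⟨m, hm⟩ := mem_iUnion.1 hx
    exact ⟨e.symm (i, m), by simpa [hQdef] using hm⟩
  have hdistQ : ∀ l x, x ∈ Q l → dist (f x) (lab l) < ε := by
    intro l x hx
    have : x ∈ f ⁻¹' Metric.ball (y (e l).1) ε := by
      rw [hBU (e l).1]
      exact mem_iUnion.2 ⟨(e l).2, hx⟩
    simpa [Metric.mem_ball] using this
  choose S hQS hSanti hSQ hSlev using fun l =>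
    pi_eq_iInter hξ (hν1 (e l).1 (e l).2) (hνle (e l).1 (e l).2) (hνc (e l).1 (e l).2)
  choose κ hκ1 hκξ hSmem hScmem using hSlev
  set φ : ℕ → X → ℕ := fun j x => sInf {l | l ≤ j ∧ x ∈ S l j} with hφdef
  have hφ_le : ∀ j x, φ j x ≤ j := by
    intro j x
    rcases eq_empty_or_nonempty {l | l ≤ j ∧ x ∈ S l j} with hT | hT
    · simp [hφdef, hT, Nat.sInf_empty]
    · exact (Nat.sInf_mem hT).1
  refine ⟨fun x => lab (sInf {l | x ∈ Q l}), fun j x => lab (φ j x), ?_, ?_, ?_⟩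
  · intro x
    have := hdistQ _ x (Nat.sInf_mem (hxQ x))
    rwa [dist_comm]
  · intro x
    set L := sInf {l | x ∈ Q l} with hL
    have hLQ : x ∈ Q L := Nat.sInf_mem (hxQ x)
    have hnot : ∀ i, i < L → x ∉ Q i := fun i hi hxi =>
      absurd (Nat.sInf_le hxi) (not_le.2 hi)
    have hex : ∀ i, ∃ jw, i < L → x ∉ S i jw := by
      intro i
      by_cases hi : i < L
      · have : x ∉ ⋂ jw, S i jw := by rw [hSQ i]; exact hnot i hi
        simp only [mem_iInter, not_forall] at this
        obtain ⟨jw, hjw⟩ := this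
        exact ⟨jw, fun _ => hjw⟩
      · exact ⟨0, fun h => absurd h hi⟩
    choose Jf hJf using hex
    set J := max L (Finset.sup (Finset.range L) Jf) with hJ
    rw [eventually_atTop]
    refine ⟨J, fun j hj => ?_⟩
    have hLmem : L ∈ {l | l ≤ j ∧ x ∈ S l j} :=
      ⟨le_trans (le_max_left _ _) hj, hQS L j hLQ⟩
    have hlow : ∀ i < L, i ∉ {l | l ≤ j ∧ x ∈ S l j} := by
      intro i hi hmem
      have hJfi : Jf i ≤ j :=
        le_trans (le_trans (Finset.le_sup (Finset.mem_range.2 hi)) (le_max_right _ _)) hj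
      exact hJf i hi (hSanti i hJfi hmem.2)
    have : φ j x = L := by
      refine le_antisymm (Nat.sInf_le hLmem) (not_lt.1 fun hc => ?_)
      exact hlow _ hc (Nat.sInf_mem ⟨L, hLmem⟩)
    exact congrArg lab this
  · intro j
    set γ : Ordinal.{0} := Finset.sup (Finset.range (j + 1)) (fun l => κ l j) with hγ
    have hκγ : ∀ l ≤ j, κ l j ≤ γ := fun l hl =>
      Finset.le_sup (f := fun l => κ l j) (Finset.mem_range.2 (Nat.lt_succ_of_le hl))
    have h1γ : 1 ≤ γ := le_trans (hκ1 0 j) (hκγ 0 j.zero_le)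
    have hγξ : γ < ξ := by
      rw [hγ, Finset.sup_lt_iff (lt_of_le_of_lt (zero_le (a := (1 : Ordinal.{0}))) hξ)]
      exact fun l _ => hκξ l j
    have h1γ1 : (1 : Ordinal.{0}) ≤ γ + 1 := h1γ.trans (hltsucc γ).le
    have hmono : ∀ l ≤ j, S l j ∈ SigmaZero X (γ + 1) ∧ (S l j)ᶜ ∈ SigmaZero X (γ + 1) := by
      intro l hl
      have hle : κ l j + 1 ≤ γ + 1 := add_le_add_left (hκγ l hl) 1
      exact ⟨sigmaZero_mono (le_trans (hκ1 l j) (hltsucc _).le) hle (hSmem l j),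
        sigmaZero_mono (le_trans (hκ1 l j) (hltsucc _).le) hle (hScmem l j)⟩
    refine ⟨γ, h1γ, hγξ, (fun k => if k ≤ j then {x | φ j x = k} else ∅), lab,
      fun k => ?_, ?_, ?_⟩
    · dsimp only
      by_cases hk : k ≤ j
      · rw [if_pos hk]
        by_cases hk0 : k = 0
        · subst hk0
          have : {x | φ j x = 0} = S 0 j ∪ (⋂ l, ⋂ _ : l < j + 1, (S l j)ᶜ) := by
            ext x
            simp only [mem_setOf_eq, hφdef, mem_union, mem_iInter, mem_compl_iff]
            rw [Nat.sInf_eq_zero]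
            constructor
            · rintro (h0 | hemp)
              · exact Or.inl h0.2
              · refine Or.inr fun l hl hxl => ?_
                rw [eq_empty_iff_forall_notMem] at hemp
                exact hemp l ⟨Nat.lt_succ_iff.1 hl, hxl⟩
            · rintro (h0 | hall)
              · exact Or.inl ⟨j.zero_le, h0⟩
              · refine Or.inr (eq_empty_iff_forall_notMem.2 fun l hl => ?_)
                exact hall l (Nat.lt_succ_of_le hl.1) hl.2
          rw [this]
          exact sigmaZero_union2 h1γ1 (hmono 0 j.zero_le).1
            (sigmaZero_biInter_lt' h1γ1 fun l hl => (hmono l (Nat.lt_succ_iff.1 hl)).2)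
        · have : {x | φ j x = k} = S k j ∩ (⋂ l, ⋂ _ : l < k, (S l j)ᶜ) := by
            ext x
            simp only [mem_setOf_eq, hφdef, mem_inter_iff, mem_iInter, mem_compl_iff]
            constructor
            · intro hphi
              have hTne : {l | l ≤ j ∧ x ∈ S l j}.Nonempty := by
                rw [Set.nonempty_iff_ne_empty]
                intro hemp
                rw [hemp] at hphi
                exact hk0 (by rw [← hphi, Nat.sInf_empty])
              have hmem := Nat.sInf_mem hTne
              rw [hphi] at hmem
              refine ⟨hmem.2, fun l hl hxl => ?_⟩
              have : sInf {l | l ≤ j ∧ x ∈ S l j} ≤ l :=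
                Nat.sInf_le ⟨le_trans hl.le (le_trans (Nat.le_of_lt_succ (Nat.lt_succ_of_le le_rfl)) hk), hxl⟩
              omega
            · rintro ⟨hxk, hlow⟩
              have hkmem : k ∈ {l | l ≤ j ∧ x ∈ S l j} := ⟨hk, hxk⟩
              refine le_antisymm (Nat.sInf_le hkmem) (not_lt.1 fun hc => ?_)
              have hmem := Nat.sInf_mem (⟨k, hkmem⟩ : {l | l ≤ j ∧ x ∈ S l j}.Nonempty)
              exact hlow _ hc hmem.2
          rw [this]
          exact sigmaZero_inter h1γ1 (hmono k hk).1
            (sigmaZero_biInter_lt' h1γ1 fun l hl => (hmono l (le_trans hl.le hk)).2)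
      · rw [if_neg hk]; exact sigmaZero_empty h1γ1
    · ext x
      simp only [mem_iUnion, mem_univ, iff_true]
      refine ⟨φ j x, ?_⟩
      rw [if_pos (hφ_le j x)]
      exact rfl
    · intro k x hx
      dsimp only at hx ⊢
      by_cases hk : k ≤ j
      · rw [if_pos hk] at hx
        exact congrArg lab hx
      · rw [if_neg hk] at hx
        exact absurd hx (notMem_empty x)

end Approx2

section Merge
variable {X Y : Type*} [TopologicalSpace X] [MetrizableSpace X] [MetricSpace Y]

/-- The Banach merge: a uniform-with-rate limit of eventually-equal limits of
countable-range functions of level `< ξ` is a single limit of such functions. -/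
theorem merge_limits {ξ : Ordinal.{0}} {f : X → Y} {h : ℕ → X → Y} {H : ℕ → ℕ → X → Y}
    (hdist : ∀ n x, dist (h n x) (f x) < (1/2 : ℝ) ^ n)
    (hev : ∀ n x, ∀ᶠ j in atTop, H n j x = h n x)
    (hpart : ∀ n j, ∃ γ, 1 ≤ γ ∧ γ < ξ ∧ CtblPart (γ + 1) (H n j)) :
    ∃ G : ℕ → X → Y, (∀ j, ∃ γ, 1 ≤ γ ∧ γ < ξ ∧ CtblPart (γ + 1) (G j)) ∧
      ∀ x, Tendsto (fun j => G j x) atTop (𝓝 (f x)) := by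
  classical
  have hltsucc : ∀ κ : Ordinal.{0}, κ < κ + 1 := fun κ => by
    rw [Ordinal.add_one_eq_succ]; exact Order.lt_succ κ
  set T : ℕ → ℝ := fun m => (1/2 : ℝ) ^ (m+1) + (1/2 : ℝ) ^ m with hT
  set C : ℕ → ℕ → X → Prop :=
    fun n j x => ∀ m, m < n → dist (H (m+1) j x) (H m j x) ≤ T m with hC
  have hC0 : ∀ j x, C 0 j x := fun j x m hm => absurd hm (Nat.not_lt_zero m)
  have hCmono : ∀ {n n' : ℕ}, n ≤ n' → ∀ {j x}, C n' j x → C n j x :=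
    fun {n n'} hnn' {j x} hc m hm => hc m (lt_of_lt_of_le hm hnn')
  set N : ℕ → X → ℕ := fun j x => Nat.findGreatest (fun n => C n j x) j with hNdef
  set G : ℕ → X → Y := fun j x => H (N j x) j x with hG
  have hCN : ∀ j x, C (N j x) j x := by
    intro j x
    have := Nat.findGreatest_spec (P := fun n => C n j x) (Nat.zero_le j) (hC0 j x)
    simpa [hNdef] using this
  have hNle : ∀ j x, N j x ≤ j := fun j x => Nat.findGreatest_le j
  choose γf h1γf hγfξ Pf using hpart
  refine ⟨G, ?_, ?_⟩
  · intro j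
    choose D c hD hcov hval using fun n => Pf n j
    set γ : Ordinal.{0} := Finset.sup (Finset.range (j+1)) (fun n => γf n j) with hγ
    have hκγ : ∀ n ≤ j, γf n j ≤ γ := fun n hn =>
      Finset.le_sup (f := fun n => γf n j) (Finset.mem_range.2 (Nat.lt_succ_of_le hn))
    have h1γ : 1 ≤ γ := le_trans (h1γf 0 j) (hκγ 0 j.zero_le)
    have hγξ : γ < ξ := by
      rw [hγ, Finset.sup_lt_iff ((zero_le (a := γf 0 j)).trans_lt (hγfξ 0 j))]
      exact fun n _ => hγfξ n j
    have h1γ1 : (1 : Ordinal.{0}) ≤ γ + 1 := h1γ.trans (hltsucc γ).le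
    have hDγ : ∀ n ≤ j, ∀ k, D n k ∈ SigmaZero X (γ + 1) := fun n hn k =>
      sigmaZero_mono (le_trans (h1γf n j) (hltsucc _).le)
        (add_le_add_left (hκγ n hn) 1) (hD n k)
    set e : ℕ ≃ ℕ × ℕ := (Denumerable.eqv (ℕ × ℕ)).symm
    -- any distance-condition set between consecutive H's is in `Σ⁰_{γ+1}`
    have key : ∀ m, m < j → ∀ p : ℝ → Prop,
        {x | p (dist (H (m+1) j x) (H m j x))} ∈ SigmaZero X (γ + 1) := by
      intro m hm p
      have hset : {x | p (dist (H (m+1) j x) (H m j x))}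
          = ⋃ q : ℕ, (if p (dist (c (m+1) (e q).1) (c m (e q).2))
              then D (m+1) (e q).1 ∩ D m (e q).2 else ∅) := by
        ext x
        simp only [mem_setOf_eq, mem_iUnion]
        constructor
        · intro hx
          have hx1 : x ∈ ⋃ k, D (m+1) k := by rw [hcov (m+1)]; exact mem_univ x
          have hx2 : x ∈ ⋃ k, D m k := by rw [hcov m]; exact mem_univ x
          obtain ⟨k1, hk1⟩ := mem_iUnion.1 hx1
          obtain ⟨k2, hk2⟩ := mem_iUnion.1 hx2
          refine ⟨e.symm (k1, k2), ?_⟩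
          rw [Equiv.apply_symm_apply]
          rw [if_pos (by rwa [← hval (m+1) k1 x hk1, ← hval m k2 x hk2])]
          exact ⟨hk1, hk2⟩
        · rintro ⟨q, hq⟩
          by_cases hc : p (dist (c (m+1) (e q).1) (c m (e q).2))
          · rw [if_pos hc] at hq
            rwa [hval (m+1) (e q).1 x hq.1, hval m (e q).2 x hq.2]
          · rw [if_neg hc] at hq
            exact absurd hq (notMem_empty x)
      rw [hset]
      refine sigmaZero_iUnion h1γ1 fun q => ?_
      by_cases hc : p (dist (c (m+1) (e q).1) (c m (e q).2))
      · rw [if_pos hc]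
        exact sigmaZero_inter h1γ1 (hDγ (m+1) hm (e q).1) (hDγ m (le_of_lt hm) (e q).2)
      · rw [if_neg hc]; exact sigmaZero_empty h1γ1
    have hCset : ∀ n ≤ j, {x | C n j x} ∈ SigmaZero X (γ + 1) := by
      intro n hn
      have : {x | C n j x} = ⋂ m, ⋂ _ : m < n, {x | dist (H (m+1) j x) (H m j x) ≤ T m} := by
        ext x; simp [hC, mem_iInter]
      rw [this]
      exact sigmaZero_biInter_lt' h1γ1 fun m hm =>
        key m (lt_of_lt_of_le hm hn) (fun r => r ≤ T m)
    have hnotCset : ∀ n ≤ j, {x | ¬ C n j x} ∈ SigmaZero X (γ + 1) := by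
      intro n hn
      have : {x | ¬ C n j x} = ⋃ m, ⋃ _ : m < n, {x | ¬ (dist (H (m+1) j x) (H m j x) ≤ T m)} := by
        ext x
        simp only [mem_setOf_eq, hC, mem_iUnion, not_forall]
      rw [this]
      exact sigmaZero_biUnion_lt h1γ1 fun m hm =>
        key m (lt_of_lt_of_le hm hn) (fun r => ¬ (r ≤ T m))
    -- characterization of N
    have hNchar : ∀ n ≤ j, ∀ x, N j x = n ↔ C n j x ∧ (n = j ∨ ¬ C (n+1) j x) := by
      intro n hn x
      constructor
      · intro hNx
        refine ⟨hNx ▸ hCN j x, ?_⟩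
        rcases eq_or_lt_of_le hn with heq | hnj
        · exact Or.inl heq
        · refine Or.inr ?_
          have hlt : Nat.findGreatest (fun n => C n j x) j < n + 1 := by
            simp only [hNdef] at hNx
            omega
          exact Nat.findGreatest_is_greatest hlt (Nat.succ_le_of_lt hnj)
      · rintro ⟨hCn, hor⟩
        have hle : n ≤ N j x := by
          have := Nat.le_findGreatest (m := n) (P := fun n => C n j x) hn hCn
          simpa [hNdef] using this
        rcases hor with heq | hnot
        · exact le_antisymm (by rw [heq]; exact hNle j x) hle
        · refine le_antisymm (not_lt.1 fun hc => ?_) hle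
          exact hnot (hCmono hc (hCN j x))
    refine ⟨γ, h1γ, hγξ, fun q => (if (e q).1 ≤ j
        then {x | N j x = (e q).1} ∩ D (e q).1 (e q).2 else ∅),
      fun q => c (e q).1 (e q).2, fun q => ?_, ?_, ?_⟩
    · dsimp only
      by_cases hq : (e q).1 ≤ j
      · rw [if_pos hq]
        have hNset : {x | N j x = (e q).1}
            = {x | C (e q).1 j x} ∩ (if (e q).1 = j then Set.univ else {x | ¬ C ((e q).1+1) j x}) := by
          ext x
          rw [mem_inter_iff]
          by_cases hej : (e q).1 = j
          · simp only [if_pos hej, mem_univ, and_true, mem_setOf_eq]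
            rw [hNchar _ hq x]
            constructor
            · exact fun hh => hh.1
            · exact fun hh => ⟨hh, Or.inl hej⟩
          · simp only [if_neg hej, mem_setOf_eq]
            rw [hNchar _ hq x]
            constructor
            · rintro ⟨h1, (h2 | h2)⟩
              · exact absurd h2 hej
              · exact ⟨h1, h2⟩
            · rintro ⟨h1, h2⟩; exact ⟨h1, Or.inr h2⟩
        rw [hNset]
        refine sigmaZero_inter h1γ1 (sigmaZero_inter h1γ1 (hCset _ hq) ?_)
          (hDγ _ hq _)
        by_cases hej : (e q).1 = j
        · rw [if_pos hej]; exact sigmaZero_univ h1γ1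
        · rw [if_neg hej]
          exact hnotCset _ (Nat.succ_le_of_lt (lt_of_le_of_ne hq hej))
      · rw [if_neg hq]; exact sigmaZero_empty h1γ1
    · ext x
      simp only [mem_iUnion, mem_univ, iff_true]
      have hx : x ∈ ⋃ k, D (N j x) k := by rw [hcov (N j x)]; exact mem_univ x
      obtain ⟨k, hk⟩ := mem_iUnion.1 hx
      refine ⟨e.symm (N j x, k), ?_⟩
      rw [Equiv.apply_symm_apply, if_pos (hNle j x)]
      exact ⟨rfl, hk⟩
    · intro q x hx
      dsimp only at hx ⊢
      by_cases hq : (e q).1 ≤ j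
      · rw [if_pos hq] at hx
        have : G j x = H (e q).1 j x := by rw [hG]; dsimp only; rw [hx.1]
        rw [this]
        exact hval (e q).1 (e q).2 x hx.2
      · rw [if_neg hq] at hx
        exact absurd hx (notMem_empty x)
  · intro x
    rw [Metric.tendsto_atTop]
    intro ε hε
    obtain ⟨n₀, hn₀⟩ := exists_pow_lt_of_lt_one (show (0:ℝ) < ε/4 by linarith)
      (by norm_num : (1/2 : ℝ) < 1)
    have hevn : ∀ᶠ j in atTop, ∀ m ∈ Finset.range (n₀+1), H m j x = h m x :=
      (eventually_all_finset _).2 fun m _ => hev m x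
    obtain ⟨J, hJ⟩ := eventually_atTop.1 (hevn.and (eventually_ge_atTop n₀))
    refine ⟨J, fun j hj => ?_⟩
    obtain ⟨hHeq, hjn₀⟩ := hJ j hj
    have hCn₀ : C n₀ j x := by
      intro m hm
      rw [hHeq (m+1) (Finset.mem_range.2 (by omega)), hHeq m (Finset.mem_range.2 (by omega))]
      calc dist (h (m+1) x) (h m x)
          ≤ dist (h (m+1) x) (f x) + dist (h m x) (f x) := dist_triangle_right _ _ _
        _ ≤ (1/2:ℝ)^(m+1) + (1/2:ℝ)^m :=
            le_of_lt (add_lt_add (hdist (m+1) x) (hdist m x))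
        _ = T m := rfl
    have hn₀N : n₀ ≤ N j x := Nat.le_findGreatest hjn₀ hCn₀
    have hchain := hCN j x
    have hsum : dist (H (N j x) j x) (H n₀ j x) ≤ ∑ i ∈ Finset.Ico n₀ (N j x), T i := by
      calc dist (H (N j x) j x) (H n₀ j x)
          = dist (H n₀ j x) (H (N j x) j x) := dist_comm _ _
        _ ≤ ∑ i ∈ Finset.Ico n₀ (N j x), dist (H i j x) (H (i+1) j x) :=
            dist_le_Ico_sum_dist (fun i => H i j x) hn₀N
        _ ≤ ∑ i ∈ Finset.Ico n₀ (N j x), T i := by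
            refine Finset.sum_le_sum fun i hi => ?_
            rw [dist_comm]
            exact hchain i (Finset.mem_Ico.1 hi).2
    have hsumT : ∑ i ∈ Finset.Ico n₀ (N j x), T i ≤ 3 * (1/2:ℝ)^n₀ := by
      have hTi : ∀ i : ℕ, T i = (3/2 : ℝ) * (1/2:ℝ)^i := by
        intro i
        rw [hT]
        dsimp only
        rw [pow_succ]
        ring
      calc ∑ i ∈ Finset.Ico n₀ (N j x), T i
          = (3/2 : ℝ) * ∑ i ∈ Finset.Ico n₀ (N j x), (1/2:ℝ)^i := by
            rw [Finset.mul_sum]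
            exact Finset.sum_congr rfl fun i _ => hTi i
        _ ≤ (3/2 : ℝ) * ((1/2:ℝ)^n₀ / (1 - 1/2)) := by
            have := geom_sum_Ico_le_of_lt_one (by norm_num : (0:ℝ) ≤ 1/2)
              (by norm_num : (1/2:ℝ) < 1) (m := n₀) (n := N j x)
            nlinarith [this]
        _ = 3 * (1/2:ℝ)^n₀ := by ring
    have hfinal : dist (G j x) (f x) < 4 * (1/2:ℝ)^n₀ := by
      have h1 : dist (G j x) (f x) ≤ dist (H (N j x) j x) (H n₀ j x) + dist (H n₀ j x) (f x) := by
        rw [hG]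
        exact dist_triangle _ _ _
      have h2 : dist (H n₀ j x) (f x) < (1/2:ℝ)^n₀ := by
        rw [hHeq n₀ (Finset.mem_range.2 (by omega))]
        exact hdist n₀ x
      calc dist (G j x) (f x) ≤ dist (H (N j x) j x) (H n₀ j x) + dist (H n₀ j x) (f x) := h1
        _ ≤ 3 * (1/2:ℝ)^n₀ + dist (H n₀ j x) (f x) := by linarith [hsum.trans hsumT]
        _ < 3 * (1/2:ℝ)^n₀ + (1/2:ℝ)^n₀ := by linarith
        _ = 4 * (1/2:ℝ)^n₀ := by ring
    linarith
end Merge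

section TheoremA
variable {X Y : Type*} [TopologicalSpace X] [TopologicalSpace Y]
  [MetrizableSpace X] [MetrizableSpace Y] [SeparableSpace Y]

/-- The Lebesgue–Hausdorff–Banach theorem: a `Σ⁰_{ξ+1}`-measurable function into a
separable metrizable space is of Baire class `ξ`. -/
theorem measurable_baireClass {ξ : Ordinal.{0}} (hξ : 1 ≤ ξ) {f : X → Y}
    (hf : ∀ U : Set Y, IsOpen U → f ⁻¹' U ∈ SigmaZero X (ξ + 1)) : BaireClass ξ f := by
  induction ξ using Ordinal.induction generalizing f with
  | h ξ IH =>
  rcases eq_or_lt_of_le hξ with rfl | hξ1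
  · rw [baireClass_one]
    intro U hU
    have := hf U hU
    rwa [one_add_one_eq_two] at this
  · have h12 : (1 : Ordinal.{0}) ≤ 2 := by
      rw [← one_add_one_eq_two]; exact le_self_add
    rcases isEmpty_or_nonempty X with hX | hX
    · rw [baireClass_ne_one hξ1.ne']
      refine ⟨fun _ => f, fun n => ⟨1, hξ1, le_rfl, ?_⟩, fun x => tendsto_const_nhds⟩
      rw [baireClass_one]
      intro U hU
      rw [Set.eq_empty_of_isEmpty (f ⁻¹' U)]
      exact sigmaZero_empty h12
    · letI : MetricSpace Y := TopologicalSpace.metrizableSpaceMetric Y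
      have key : ∀ n : ℕ, ∃ (h : X → Y) (H : ℕ → X → Y),
          (∀ x, dist (h x) (f x) < (1/2 : ℝ)^n) ∧ (∀ x, ∀ᶠ j in atTop, H j x = h x) ∧
          (∀ j, ∃ γ, 1 ≤ γ ∧ γ < ξ ∧ CtblPart (γ + 1) (H j)) :=
        fun n => approx_eventually hξ1 hf (by positivity)
      choose h H hdist hev hpart using key
      obtain ⟨G, hGpart, hGlim⟩ :=
        merge_limits (fun n x => hdist n x) (fun n x => hev n x) (fun n j => hpart n j)
      rw [baireClass_ne_one hξ1.ne']
      refine ⟨G, fun j => ?_, hGlim⟩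
      obtain ⟨γ, h1γ, hγξ, hp⟩ := hGpart j
      have h1γ1 : (1 : Ordinal.{0}) ≤ γ + 1 := by
        refine h1γ.trans ?_
        rw [Ordinal.add_one_eq_succ]; exact (Order.le_succ γ)
      exact ⟨γ, hγξ, h1γ, IH γ hγξ h1γ (fun U _ => hp.preimage h1γ1 U)⟩

end TheoremA

/-- Let `X`, `Y` be metrizable spaces with `Y` separable.
(a) For `1 ≤ ξ < ω₁`, a pointwise limit of a sequence of `Δ⁰_ξ`-functions is
of Baire class `ξ`.
(b) For `1 < ξ < ω₁`, every Baire class `ξ` function is the pointwise limit of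
a sequence of `Δ⁰_ξ`-functions. -/
theorem pointwise_limit_deltaFun_and_baireClass
    {X Y : Type*} [TopologicalSpace X] [TopologicalSpace Y]
    [TopologicalSpace.MetrizableSpace X] [TopologicalSpace.MetrizableSpace Y]
    [TopologicalSpace.SeparableSpace Y]
    (ξ : Ordinal.{0}) (hξ : ξ < ω₁) (f : X → Y) :
    (1 ≤ ξ →
      (∃ g : ℕ → X → Y, (∀ n, IsDeltaFun ξ (g n)) ∧
        ∀ x, Tendsto (fun n => g n x) atTop (𝓝 (f x))) →
      BaireClass ξ f) ∧
    (1 < ξ → BaireClass ξ f →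
      ∃ g : ℕ → X → Y, (∀ n, IsDeltaFun ξ (g n)) ∧
        ∀ x, Tendsto (fun n => g n x) atTop (𝓝 (f x))) := by
  constructor
  · rintro h1ξ ⟨g, hg, hlim⟩
    letI : MetricSpace Y := TopologicalSpace.metrizableSpaceMetric Y
    rcases eq_or_lt_of_le h1ξ with rfl | hξ1
    · rw [baireClass_one]
      intro U hU
      have hg' : ∀ (n : ℕ) (C : Set Y), IsClosed C → (g n ⁻¹' C)ᶜ ∈ SigmaZero X 1 := by
        intro n C hC
        rw [← preimage_compl]
        exact hg n Cᶜ (isOpen_mem_sigmaZero_one hC.isOpen_compl)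
      have := limit_measurable le_rfl hg' hlim hU
      rwa [one_add_one_eq_two] at this
    · have hmeas : ∀ U : Set Y, IsOpen U → f ⁻¹' U ∈ SigmaZero X (ξ + 1) := by
        intro U hU
        refine limit_measurable h1ξ (fun n C hC => ?_) hlim hU
        rw [← preimage_compl]
        exact hg n Cᶜ (hC.isOpen_compl.mem_sigmaZero h1ξ)
      exact measurable_baireClass h1ξ hmeas
  · intro hξ1 hB
    rw [baireClass_ne_one hξ1.ne'] at hB
    obtain ⟨g, hg, hlim⟩ := hB
    rcases isEmpty_or_nonempty X with hX | hX
    · refine ⟨fun _ => f, fun n A hA => ?_, fun x => tendsto_const_nhds⟩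
      rw [Set.eq_empty_of_isEmpty (f ⁻¹' A)]
      exact sigmaZero_empty hξ1.le
    · have hgm : ∀ n, ∀ U : Set Y, IsOpen U → g n ⁻¹' U ∈ SigmaZero X ξ := by
        intro n U hU
        obtain ⟨ν, hν, h1, hb⟩ := hg n
        have hm := BaireClass.measurable h1 hb hU
        have hν1 : ν + 1 ≤ ξ := by
          rw [Ordinal.add_one_eq_succ]; exact Order.succ_le_of_lt hν
        have h1ν1 : (1 : Ordinal.{0}) ≤ ν + 1 := by
          refine h1.trans ?_
          rw [Ordinal.add_one_eq_succ]; exact Order.le_succ ν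
        exact sigmaZero_mono h1ν1 hν1 hm
      letI : MetricSpace Y := TopologicalSpace.metrizableSpaceMetric Y
      have key : ∀ n : ℕ, ∃ h : X → Y, CtblPart ξ h ∧ ∀ x, dist (h x) (g n x) < (1/2 : ℝ)^n :=
        fun n => approx_ctblPart hξ1 (hgm n) (by positivity)
      choose h hpart hdist using key
      refine ⟨h, fun n A _ => (hpart n).preimage hξ1.le A, ?_⟩
      intro x
      rw [Metric.tendsto_atTop]
      intro ε hε
      obtain ⟨N1, hN1⟩ := (Metric.tendsto_atTop.1 (hlim x)) (ε/2) (by linarith)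
      obtain ⟨N2, hN2⟩ := exists_pow_lt_of_lt_one (show (0:ℝ) < ε/2 by linarith)
        (by norm_num : (1/2 : ℝ) < 1)
      refine ⟨max N1 N2, fun n hn => ?_⟩
      have h1 := hN1 n (le_trans (le_max_left _ _) hn)
      have h2 : (1/2 : ℝ)^n ≤ (1/2 : ℝ)^N2 :=
        pow_le_pow_of_le_one (by norm_num) (by norm_num) (le_trans (le_max_right _ _) hn)
      calc dist (h n x) (f x) ≤ dist (h n x) (g n x) + dist (g n x) (f x) := dist_triangle _ _ _
        _ < (1/2 : ℝ)^n + ε/2 := add_lt_add (hdist n x) h1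
        _ ≤ (1/2 : ℝ)^N2 + ε/2 := by linarith
        _ < ε := by linarith [hN2]
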